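/- arXiv:1601.08224 — 5 statements merged into one kernel-verified Lean document; each statement's English description precedes it below -/
import Mathlib

section
/- For every integer m ≥ 1, the number of pairs (a, b) of nonincreasing sequences a, b : {1,…,m} → ℕ with all entries at most m, such that (a, b) is a graphical bipartite degree sequence (realizable by a bipartite graph on parts of sizes m and m) and at least one of a, b is almost regular, equals 2·C(2m, m) − m² − 1, where C(2m, m) is the binomial coefficient. -/
namespace AHR

lemma succ_div_mod (m S : ℕ) (hm : 0 < m) :
    (S % m + 1 < m → (S+1) / m = S / m ∧ (S+1) % m = S % m + 1) ∧
    (S % m + 1 = m → (S+1) / m = S / m + 1 ∧ (S+1) % m = 0) := by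
  have h2 := Nat.div_add_mod S m
  constructor
  · intro h
    exact (Nat.div_mod_unique (a := S+1) (b := m) (c := S % m + 1) (d := S / m) hm).mpr
      (by constructor <;> omega)
  · intro h
    have h3 : m * (S / m + 1) = m * (S/m) + m := by ring
    exact (Nat.div_mod_unique (a := S+1) (b := m) (c := 0) (d := S / m + 1) hm).mpr
      (by constructor <;> omega)

lemma card_range_filter_mod (m S j : ℕ) (hm : 0 < m) (hj : j < m) :
    ((Finset.range S).filter (fun k => k % m = j)).card
      = S / m + if j < S % m then 1 else 0 := by
  induction S with
  | zero => simp
  | succ S ih =>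
    rw [Finset.range_add_one, Finset.filter_insert]
    have hSm := Nat.mod_lt S hm
    obtain ⟨c1, c2⟩ := succ_div_mod m S hm
    rcases Nat.lt_or_ge (S % m + 1) m with h | h
    · obtain ⟨d1, d2⟩ := c1 h
      by_cases hc : S % m = j
      · rw [if_pos hc, Finset.card_insert_of_notMem (by simp), ih, d1, d2]
        split_ifs <;> omega
      · rw [if_neg hc, ih, d1, d2]
        split_ifs <;> omega
    · have h' : S % m + 1 = m := by omega
      obtain ⟨d1, d2⟩ := c2 h'
      by_cases hc : S % m = j
      · rw [if_pos hc, Finset.card_insert_of_notMem (by simp), ih, d1, d2]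
        split_ifs <;> omega
      · rw [if_neg hc, ih, d1, d2]
        split_ifs <;> omega


def reg (m S : ℕ) : Fin m → ℕ := fun j => S / m + if j.val < S % m then 1 else 0

lemma sum_ind (m r : ℕ) (hr : r ≤ m) :
    (∑ j : Fin m, if j.val < r then 1 else 0) = r := by
  rw [Fin.sum_univ_eq_sum_range (fun j => if j < r then 1 else 0)]
  have : (Finset.range m).filter (fun j => j < r) = Finset.range r := by
    ext x; simp; omega
  rw [← Finset.sum_filter, this]
  simp

lemma sum_reg (m S : ℕ) (hm : 0 < m) : ∑ j, reg m S j = S := by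
  unfold reg
  rw [Finset.sum_add_distrib, Finset.sum_const, sum_ind m _ (le_of_lt (Nat.mod_lt S hm))]
  simp [Finset.card_univ]
  have := Nat.div_add_mod S m
  omega

lemma reg_mono (m S : ℕ) : ∀ i j : Fin m, i ≤ j → reg m S j ≤ reg m S i := by
  intro i j hij
  unfold reg
  have : (i : ℕ) ≤ j := hij
  split_ifs <;> omega

lemma reg_ar (m S : ℕ) : ∀ i j : Fin m, reg m S i ≤ reg m S j + 1 := by
  intro i j; unfold reg; split_ifs <;> omega

lemma reg_le (m S : ℕ) (hm : 0 < m) (hS : S ≤ m * m) : ∀ j, reg m S j ≤ m := by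
  intro j
  have h2 := Nat.div_add_mod S m
  have h3 : S % m < m := Nat.mod_lt S hm
  unfold reg
  have hd : S / m ≤ m := by
    have := Nat.div_le_div_right (c := m) hS
    rwa [Nat.mul_div_cancel _ hm] at this
  rcases Nat.lt_or_ge (S/m) m with h | h
  · split_ifs <;> omega
  · have hd' : S / m = m := le_antisymm hd h
    have hm2 : m * (S/m) = m * m := by rw [hd']
    have : S % m = 0 := by omega
    simp [this, hd']

lemma reg_unique (m : ℕ) (hm : 0 < m) (b : Fin m → ℕ)
    (hmono : ∀ i j : Fin m, i ≤ j → b j ≤ b i)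
    (har : ∀ i j : Fin m, b i ≤ b j + 1) :
    b = reg m (∑ j, b j) := by
  classical
  set last : Fin m := ⟨m - 1, by omega⟩ with hlast
  set t := b last with ht
  have hub : ∀ j, b j ≤ t + 1 := fun j => har j last
  have hlb : ∀ j, t ≤ b j := fun j => hmono j last (by
    simp [Fin.le_def, hlast]; omega)
  set A := Finset.univ.filter (fun j : Fin m => b j = t + 1) with hA
  set s := A.card with hs
  have key : ∀ j : Fin m, b j = t + 1 ↔ j.val < s := by
    intro j
    constructor
    · intro hj
      have hsub : Finset.Iic j ⊆ A := by
        intro j' hj'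
        simp only [Finset.mem_Iic] at hj'
        simp only [hA, Finset.mem_filter, Finset.mem_univ, true_and]
        have := hmono j' j hj'  -- wrong direction
        have h1 := hmono j' j
        have h2 : b j ≤ b j' := hmono j' j hj'
        have := hub j'
        omega
      have := Finset.card_le_card hsub
      rw [Fin.card_Iic] at this
      omega
    · intro hj
      by_contra hne
      have hbj : b j = t := by have := hub j; have := hlb j; omega
      have hsub : A ⊆ Finset.Iio j := by
        intro j' hj'
        simp only [hA, Finset.mem_filter, Finset.mem_univ, true_and] at hj'
        simp only [Finset.mem_Iio]
        by_contra hge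
        have : j ≤ j' := le_of_not_gt hge
        have := hmono j j' this
        omega
      have := Finset.card_le_card hsub
      rw [Fin.card_Iio] at this
      omega
  have hbj : ∀ j : Fin m, b j = t + if j.val < s then 1 else 0 := by
    intro j
    by_cases h : j.val < s
    · rw [if_pos h]; exact (key j).mpr h
    · rw [if_neg h]
      have : ¬ (b j = t + 1) := fun hc => h ((key j).mp hc)
      have := hub j; have := hlb j; omega
  have hsum : ∑ j, b j = m * t + s := by
    rw [Finset.sum_congr rfl (fun j _ => hbj j), Finset.sum_add_distrib,
      Finset.sum_const, sum_ind m s (by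
        have := Finset.card_le_card (Finset.subset_univ A)
        simpa [Finset.card_univ] using this)]
    simp [Finset.card_univ, mul_comm]
  have hslt : s < m := by
    have hlastA : last ∉ A := by
      simp [hA, ht]
    have hsub : A ⊆ Finset.univ.erase last := by
      intro x hx
      exact Finset.mem_erase.mpr ⟨fun hc => hlastA (hc ▸ hx), Finset.mem_univ x⟩
    have := Finset.card_le_card hsub
    rw [Finset.card_erase_of_mem (Finset.mem_univ _), Finset.card_univ] at this
    simp at this
    omega
  have hdm := (Nat.div_mod_unique (a := ∑ j, b j) (b := m) (c := s) (d := t) hm).mpr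
    ⟨by omega, hslt⟩
  funext j
  rw [hbj j]
  unfold reg
  rw [hdm.1, hdm.2]


lemma tele (P : ℕ → ℕ) (hP : Monotone P) (hP0 : P 0 = 0) (q : ℕ → Prop) [DecidablePred q] :
    ∀ N, ∑ n ∈ Finset.range N, ((Finset.Ico (P n) (P (n+1))).filter q).card
      = ((Finset.range (P N)).filter q).card := by
  intro N
  induction N with
  | zero => simp [hP0]
  | succ N ih =>
    rw [Finset.sum_range_succ, ih]
    simp only [Finset.range_eq_Ico]
    rw [← Finset.Ico_union_Ico_eq_Ico (Nat.zero_le (P N)) (hP (Nat.le_succ N)),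
      Finset.filter_union,
      Finset.card_union_of_disjoint
        (Finset.disjoint_filter_filter (Finset.Ico_disjoint_Ico_consecutive 0 (P N) (P (N+1))))]

lemma mod_injOn (m u v : ℕ) (hm : 0 < m) (hlen : v ≤ u + m) :
    Set.InjOn (fun k => k % m) (Finset.Ico u v) := by
  intro k1 h1 k2 h2 heq
  simp only [Finset.coe_Ico, Set.mem_Ico] at h1 h2
  have heq' : k1 % m = k2 % m := heq
  rcases le_total k1 k2 with h | h
  · have hd : m ∣ k2 - k1 := (Nat.modEq_iff_dvd' h).mp heq'
    rcases Nat.eq_zero_or_pos (k2 - k1) with h0 | h0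
    · omega
    · exact absurd (Nat.le_of_dvd h0 hd) (by omega)
  · have hd : m ∣ k1 - k2 := (Nat.modEq_iff_dvd' h).mp heq'.symm
    rcases Nat.eq_zero_or_pos (k1 - k2) with h0 | h0
    · omega
    · exact absurd (Nat.le_of_dvd h0 hd) (by omega)

lemma exists_E (m : ℕ) (hm : 0 < m) (a : Fin m → ℕ) (ha : ∀ i, a i ≤ m) :
    ∃ E : Finset (Fin m × Fin m),
      (∀ i, (E.filter (fun p => p.1 = i)).card = a i) ∧
      (∀ j, (E.filter (fun p => p.2 = j)).card = reg m (∑ i, a i) j) := by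
  classical
  set A : ℕ → ℕ := fun n => if h : n < m then a ⟨n, h⟩ else 0 with hA
  set P : ℕ → ℕ := fun n => ∑ k ∈ Finset.range n, A k with hP
  have hPmono : Monotone P := by
    intro x y hxy
    exact Finset.sum_le_sum_of_subset (Finset.range_subset_range.mpr hxy)
  have hPsucc : ∀ i : Fin m, P (i.val + 1) = P i.val + a i := by
    intro i
    simp only [hP, Finset.sum_range_succ, hA, dif_pos i.isLt, Fin.eta]
  have hPm : P m = ∑ i, a i := by
    show ∑ k ∈ Finset.range m, A k = _
    rw [← Fin.sum_univ_eq_sum_range A m]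
    exact Finset.sum_congr rfl (fun i _ => by simp [hA, i.isLt])
  set f : Fin m → ℕ → Fin m × Fin m :=
    fun i k => (i, (⟨k % m, Nat.mod_lt k hm⟩ : Fin m)) with hf
  set R : Fin m → Finset ℕ := fun i => Finset.Ico (P i.val) (P i.val + a i) with hR
  have hinj : ∀ i : Fin m, Set.InjOn (f i) (R i) := by
    intro i k1 h1 k2 h2 heq
    have : k1 % m = k2 % m := by
      have := congrArg (fun p => (p.2 : Fin m).val) heq
      simpa [hf] using this
    exact mod_injOn m (P i.val) (P i.val + a i) hm (by have := ha i; omega) h1 h2 this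
  refine ⟨Finset.univ.biUnion (fun i : Fin m => (R i).image (f i)), ?_, ?_⟩
  · intro i
    rw [Finset.filter_biUnion]
    have hcase : ∀ i' : Fin m, ((R i').image (f i')).filter (fun p => p.1 = i)
        = if i' = i then (R i').image (f i') else ∅ := by
      intro i'
      split_ifs with h
      · subst h
        exact Finset.filter_true_of_mem (by
          intro p hp
          obtain ⟨k, _, rfl⟩ := Finset.mem_image.mp hp
          rfl)
      · exact Finset.filter_false_of_mem (by
          intro p hp
          obtain ⟨k, _, rfl⟩ := Finset.mem_image.mp hp
          simpa [hf] using h)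
    calc (Finset.univ.biUnion fun i' => (((R i').image (f i')).filter (fun p => p.1 = i))).card
        = (Finset.univ.biUnion fun i' => if i' = i then (R i').image (f i') else ∅).card := by
          congr 1; exact Finset.biUnion_congr rfl (fun i' _ => hcase i')
      _ = ((R i).image (f i)).card := by
          congr 1
          ext p
          simp only [Finset.mem_biUnion, Finset.mem_univ, true_and]
          constructor
          · rintro ⟨i', hi'⟩
            by_cases h : i' = i
            · rw [if_pos h] at hi'; subst h; exact hi'
            · rw [if_neg h] at hi'; exact absurd hi' (Finset.notMem_empty p)
          · intro hp
            exact ⟨i, by simp [hp]⟩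
      _ = (R i).card := Finset.card_image_of_injOn (hinj i)
      _ = a i := by simp [hR]
  · intro j
    rw [Finset.filter_biUnion]
    rw [Finset.card_biUnion (by
      intro x _ y _ hxy
      refine Finset.disjoint_left.mpr ?_
      intro p hp hq
      apply hxy
      have hx := (Finset.mem_image.mp (Finset.mem_of_mem_filter p hp))
      have hy := (Finset.mem_image.mp (Finset.mem_of_mem_filter p hq))
      obtain ⟨k1, _, rfl⟩ := hx
      obtain ⟨k2, _, e⟩ := hy
      exact congrArg Prod.fst e.symm)]
    have inner : ∀ i : Fin m, (((R i).image (f i)).filter (fun p => p.2 = j)).card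
        = ((R i).filter (fun k => k % m = j.val)).card := by
      intro i
      rw [Finset.filter_image]
      rw [Finset.card_image_of_injOn (Set.InjOn.mono (by
        intro x hx
        exact Finset.mem_of_mem_filter x hx) (hinj i))]
      congr 1
      apply Finset.filter_congr
      intro k _
      simp [hf, Fin.ext_iff]
    rw [Finset.sum_congr rfl (fun i _ => inner i)]
    have : ∀ i : Fin m, ((R i).filter (fun k => k % m = j.val)).card
        = ((Finset.Ico (P i.val) (P (i.val+1))).filter (fun k => k % m = j.val)).card := by
      intro i; rw [hPsucc i]
    rw [Finset.sum_congr rfl (fun i _ => this i)]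
    rw [Fin.sum_univ_eq_sum_range
      (fun n => ((Finset.Ico (P n) (P (n+1))).filter (fun k => k % m = j.val)).card) m]
    rw [tele P hPmono (by simp [hP]) _ m, hPm]
    exact card_range_filter_mod m _ j.val hm j.isLt


lemma strictMono_gap {m n : ℕ} (g : Fin m → Fin n) (hg : StrictMono g) :
    ∀ d : ℕ, ∀ i j : Fin m, i.val + d = j.val → (g i : ℕ) + d ≤ (g j : ℕ) := by
  intro d
  induction d with
  | zero => intro i j h; have : i = j := Fin.ext (by omega); subst this; simp
  | succ d ih =>
    intro i j h
    have hj' : i.val + d < m := by have := j.isLt; omega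
    set j' : Fin m := ⟨i.val + d, hj'⟩ with hj'def
    have h1 := ih i j' rfl
    have h2 : j' < j := by rw [Fin.lt_def]; simp [hj'def]; omega
    have := hg h2
    rw [Fin.lt_def] at this
    omega

def Mset (m : ℕ) := {a : Fin m → ℕ // (∀ i j : Fin m, i ≤ j → a j ≤ a i) ∧ ∀ i, a i ≤ m}

noncomputable def MEquiv (m : ℕ) (hm : 0 < m) :
    Mset m ≃ {s : Finset (Fin (2*m)) // s.card = m} := by
  classical
  have hge : ∀ (s : {s : Finset (Fin (2*m)) // s.card = m}) (i : Fin m),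
      (i : ℕ) ≤ (s.1.orderEmbOfFin s.2 i : ℕ) := by
    intro s i
    have := strictMono_gap _ (s.1.orderEmbOfFin s.2).strictMono i.val ⟨0, hm⟩ i (by simp)
    omega
  have hle : ∀ (s : {s : Finset (Fin (2*m)) // s.card = m}) (i : Fin m),
      (s.1.orderEmbOfFin s.2 i : ℕ) ≤ m + i := by
    intro s i
    have := strictMono_gap _ (s.1.orderEmbOfFin s.2).strictMono (m - 1 - i.val) i
      ⟨m - 1, by omega⟩ (by have := i.isLt; simp; omega)
    have := (s.1.orderEmbOfFin s.2 ⟨m - 1, by omega⟩).isLt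
    have := i.isLt
    omega
  refine
  { toFun := fun a => ⟨Finset.univ.image
      (fun i : Fin m => (⟨m - a.1 i + i, by have := a.2.2 i; have := i.isLt; omega⟩ : Fin (2*m))),
      ?_⟩
    invFun := fun s => ⟨fun i => m - ((s.1.orderEmbOfFin s.2 i : ℕ) - i), ?_, ?_⟩
    left_inv := ?_
    right_inv := ?_ }
  · -- card
    rw [Finset.card_image_of_injective _ (fun i j hij => ?_), Finset.card_univ, Fintype.card_fin]
    have h1 : m - a.1 i + i.val = m - a.1 j + j.val := by
      have := congrArg Fin.val hij; simpa using this
    rcases lt_trichotomy i j with h | h | h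
    · have := a.2.1 i j (le_of_lt h); have := a.2.2 i; have := a.2.2 j
      rw [Fin.lt_def] at h; omega
    · exact h
    · have := a.2.1 j i (le_of_lt h); have := a.2.2 i; have := a.2.2 j
      rw [Fin.lt_def] at h
      exfalso; omega
  · -- mono
    intro i j hij
    show m - ((s.1.orderEmbOfFin s.2 j : ℕ) - j) ≤ m - ((s.1.orderEmbOfFin s.2 i : ℕ) - i)
    rw [Fin.le_def] at hij
    have hgap := strictMono_gap _ (s.1.orderEmbOfFin s.2).strictMono (j.val - i.val) i j (by omega)
    have := hge s i
    omega
  · intro i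
    show m - ((s.1.orderEmbOfFin s.2 i : ℕ) - i) ≤ m
    omega
  · -- left_inv
    intro a
    apply Subtype.ext
    funext i
    dsimp only
    set h : Fin m → Fin (2*m) := fun i =>
      ⟨m - a.1 i + i, by have := a.2.2 i; have := i.isLt; omega⟩ with hh
    have hsm : StrictMono h := by
      intro i j hij
      rw [Fin.lt_def]
      simp only [hh]
      have := a.2.1 i j (le_of_lt hij); have := a.2.2 i; have := a.2.2 j
      rw [Fin.lt_def] at hij
      omega
    have hmem : ∀ x, h x ∈ Finset.univ.image h := fun x =>
      Finset.mem_image_of_mem h (Finset.mem_univ x)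
    have huniq := (Finset.orderEmbOfFin_unique (s := Finset.univ.image h)
      (f := h) ?hcard hmem hsm)
    case hcard => rw [Finset.card_image_of_injective _ hsm.injective, Finset.card_univ,
      Fintype.card_fin]
    rw [← huniq]
    show m - ((m - a.1 i + i.val) - i.val) = a.1 i
    have := a.2.2 i
    omega
  · -- right_inv
    intro s
    apply Subtype.ext
    show Finset.univ.image _ = s.1
    have key : ∀ i : Fin m,
        (⟨m - (m - ((s.1.orderEmbOfFin s.2 i : ℕ) - i.val)) + i.val,
          by have := (s.1.orderEmbOfFin s.2 i).isLt; have := i.isLt; omega⟩ : Fin (2*m))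
          = s.1.orderEmbOfFin s.2 i := by
      intro i
      apply Fin.ext
      show m - (m - ((s.1.orderEmbOfFin s.2 i : ℕ) - i.val)) + i.val = _
      have := hge s i; have := hle s i
      omega
    ext x
    simp only [Finset.mem_image, Finset.mem_univ, true_and]
    constructor
    · rintro ⟨i, rfl⟩
      rw [key i]
      exact Finset.orderEmbOfFin_mem s.1 s.2 i
    · intro hx
      have : x ∈ Set.range (s.1.orderEmbOfFin s.2) := by
        rw [Finset.range_orderEmbOfFin]; exact hx
      obtain ⟨i, rfl⟩ := this
      exact ⟨i, key i⟩

lemma card_Mset (m : ℕ) (hm : 0 < m) : Nat.card (Mset m) = (2*m).choose m := by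
  rw [Nat.card_congr (MEquiv m hm), Nat.card_eq_fintype_card, Fintype.card_subtype]
  rw [← Finset.powerset_univ, ← Finset.powersetCard_eq_filter, Finset.card_powersetCard,
    Finset.card_univ, Fintype.card_fin]


def orEquiv {X : Type*} (base p q : X → Prop) [DecidablePred p] :
    ({x : X // base x ∧ (p x ∨ q x)} ⊕ {x : X // base x ∧ p x ∧ q x}) ≃
    ({x : X // base x ∧ p x} ⊕ {x : X // base x ∧ q x}) where
  toFun z := match z with
    | .inl ⟨x, hb, hpq⟩ =>
        if hp : p x then .inl ⟨x, hb, hp⟩ else .inr ⟨x, hb, hpq.resolve_left hp⟩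
    | .inr ⟨x, hb, _, hq⟩ => .inr ⟨x, hb, hq⟩
  invFun z := match z with
    | .inl ⟨x, hb, hp⟩ => .inl ⟨x, hb, Or.inl hp⟩
    | .inr ⟨x, hb, hq⟩ =>
        if hp : p x then .inr ⟨x, hb, hp, hq⟩ else .inl ⟨x, hb, Or.inr hq⟩
  left_inv z := by
    rcases z with ⟨x, hb, hpq⟩ | ⟨x, hb, hp, hq⟩
    · dsimp only
      split_ifs with h
      · rfl
      · dsimp only; rw [dif_neg h]
    · dsimp only
      rw [dif_pos hp]
  right_inv z := by
    rcases z with ⟨x, hb, hp⟩ | ⟨x, hb, hq⟩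
    · dsimp only
      rw [dif_pos hp]
    · dsimp only
      split_ifs with h
      · rfl
      · dsimp only; rw [dif_neg h]

lemma sum_eq_card (m : ℕ) (E : Finset (Fin m × Fin m)) (a : Fin m → ℕ)
    (hrow : ∀ i, (E.filter (fun p => p.1 = i)).card = a i) : ∑ i, a i = E.card := by
  rw [Finset.card_eq_sum_card_fiberwise (f := Prod.fst) (t := Finset.univ)
    (fun x _ => Finset.mem_univ _)]
  exact Finset.sum_congr rfl fun i _ => (hrow i).symm

lemma exists_iff (m : ℕ) (hm : 0 < m) (a b : Fin m → ℕ)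
    (hma : ∀ i j : Fin m, i ≤ j → a j ≤ a i) (hmb : ∀ i j : Fin m, i ≤ j → b j ≤ b i)
    (hla : ∀ i, a i ≤ m) (hlb : ∀ i, b i ≤ m)
    (har : (∀ i j, a i ≤ a j + 1) ∨ (∀ i j, b i ≤ b j + 1)) :
    (∃ E : Finset (Fin m × Fin m),
        (∀ i, (E.filter (fun p => p.1 = i)).card = a i) ∧
        (∀ j, (E.filter (fun p => p.2 = j)).card = b j)) ↔ ∑ i, a i = ∑ i, b i := by
  constructor
  · rintro ⟨E, hrow, hcol⟩
    rw [sum_eq_card m E a hrow]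
    have hcol' : ∀ j, ((E.image Prod.swap).filter (fun p => p.1 = j)).card = b j := by
      intro j
      rw [Finset.filter_image, Finset.card_image_of_injective _ Prod.swap_injective]
      exact hcol j
    have := sum_eq_card m (E.image Prod.swap) b hcol'
    rw [this, Finset.card_image_of_injective _ Prod.swap_injective]
  · intro hsum
    rcases har with hp | hq
    · -- a almost regular : build for (b, reg) then swap
      obtain ⟨E, hrow, hcol⟩ := exists_E m hm b hlb
      have haeq : a = reg m (∑ i, b i) := by rw [← hsum]; exact reg_unique m hm a hma hp
      refine ⟨E.image Prod.swap, ?_, ?_⟩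
      · intro i
        rw [Finset.filter_image, Finset.card_image_of_injective _ Prod.swap_injective]
        have : (Finset.filter (fun a => (Prod.swap a).1 = i) E)
            = (Finset.filter (fun p => p.2 = i) E) := rfl
        rw [this, hcol i, ← haeq]
      · intro j
        rw [Finset.filter_image, Finset.card_image_of_injective _ Prod.swap_injective]
        have : (Finset.filter (fun a => (Prod.swap a).2 = j) E)
            = (Finset.filter (fun p => p.1 = j) E) := rfl
        rw [this, hrow j]
    · obtain ⟨E, hrow, hcol⟩ := exists_E m hm a hla
      have hbeq : b = reg m (∑ i, a i) := by rw [hsum]; exact reg_unique m hm b hmb hq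
      exact ⟨E, hrow, fun j => by rw [hcol j, ← hbeq]⟩


end AHR

/-- **Counting almost-half-regular bipartite degree sequences.**  For every `m ≥ 1`,
the number of pairs `(a, b)` of nonincreasing sequences of length `m` with entries at
most `m`, graphical as a bipartite degree sequence on parts of sizes `m` and `m`
(the bipartite graph is modelled by its edge set `E ⊆ Fin m × Fin m`) and with at
least one of `a`, `b` almost regular, equals `2·C(2m, m) − m² − 1`. -/
theorem count_almost_half_regular_bipartite_sequences (m : ℕ) (hm : 1 ≤ m) :
    Nat.card {ab : (Fin m → ℕ) × (Fin m → ℕ) //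
      (∀ i j : Fin m, i ≤ j → ab.1 j ≤ ab.1 i) ∧
      (∀ i j : Fin m, i ≤ j → ab.2 j ≤ ab.2 i) ∧
      (∀ i, ab.1 i ≤ m) ∧ (∀ i, ab.2 i ≤ m) ∧
      (∃ E : Finset (Fin m × Fin m),
        (∀ i, (E.filter (fun p => p.1 = i)).card = ab.1 i) ∧
        (∀ j, (E.filter (fun p => p.2 = j)).card = ab.2 j)) ∧
      ((∀ i j, ab.1 i ≤ ab.1 j + 1) ∨ (∀ i j, ab.2 i ≤ ab.2 j + 1))} =
    2 * Nat.choose (2 * m) m - m ^ 2 - 1 := by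
  classical
  have hm0 : 0 < m := hm
  set X := (Fin m → ℕ) × (Fin m → ℕ)
  set base : X → Prop := fun ab =>
    (∀ i j : Fin m, i ≤ j → ab.1 j ≤ ab.1 i) ∧
    (∀ i j : Fin m, i ≤ j → ab.2 j ≤ ab.2 i) ∧
    (∀ i, ab.1 i ≤ m) ∧ (∀ i, ab.2 i ≤ m) ∧ (∑ i, ab.1 i = ∑ i, ab.2 i) with hbase
  set p : X → Prop := fun ab => ∀ i j, ab.1 i ≤ ab.1 j + 1 with hp
  set q : X → Prop := fun ab => ∀ i j, ab.2 i ≤ ab.2 j + 1 with hq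
  -- Step 1: replace the ∃E clause by sum equality
  have step1 : Nat.card {ab : X //
      (∀ i j : Fin m, i ≤ j → ab.1 j ≤ ab.1 i) ∧
      (∀ i j : Fin m, i ≤ j → ab.2 j ≤ ab.2 i) ∧
      (∀ i, ab.1 i ≤ m) ∧ (∀ i, ab.2 i ≤ m) ∧
      (∃ E : Finset (Fin m × Fin m),
        (∀ i, (E.filter (fun p => p.1 = i)).card = ab.1 i) ∧
        (∀ j, (E.filter (fun p => p.2 = j)).card = ab.2 j)) ∧
      ((∀ i j, ab.1 i ≤ ab.1 j + 1) ∨ (∀ i j, ab.2 i ≤ ab.2 j + 1))}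
      = Nat.card {ab : X // base ab ∧ (p ab ∨ q ab)} := by
    apply Nat.card_congr
    apply Equiv.subtypeEquivRight
    intro ab
    constructor
    · rintro ⟨h1, h2, h3, h4, h5, h6⟩
      exact ⟨⟨h1, h2, h3, h4, (AHR.exists_iff m hm0 ab.1 ab.2 h1 h2 h3 h4 h6).mp h5⟩, h6⟩
    · rintro ⟨⟨h1, h2, h3, h4, h5⟩, h6⟩
      exact ⟨h1, h2, h3, h4, (AHR.exists_iff m hm0 ab.1 ab.2 h1 h2 h3 h4 h6).mpr h5, h6⟩
  rw [step1]
  -- Equivalences for the three pieces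
  have sum_le : ∀ a : Fin m → ℕ, (∀ i, a i ≤ m) → ∑ i, a i ≤ m * m := by
    intro a ha
    calc ∑ i, a i ≤ ∑ _i : Fin m, m := Finset.sum_le_sum (fun i _ => ha i)
    _ = m * m := by simp [Finset.card_univ, mul_comm]
  have eP : {ab : X // base ab ∧ p ab} ≃ AHR.Mset m :=
  { toFun := fun z => ⟨z.1.2, z.2.1.2.1, z.2.1.2.2.2.1⟩
    invFun := fun b => ⟨(AHR.reg m (∑ j, b.1 j), b.1),
      ⟨AHR.reg_mono m _, b.2.1,
        AHR.reg_le m _ hm0 (sum_le b.1 b.2.2), b.2.2, by rw [AHR.sum_reg m _ hm0]⟩,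
      fun i j => AHR.reg_ar m _ i j⟩
    left_inv := by
      rintro ⟨⟨a, b⟩, ⟨h1, h2, h3, h4, h5⟩, h6⟩
      apply Subtype.ext
      show (AHR.reg m (∑ j, b j), b) = (a, b)
      have : a = AHR.reg m (∑ j, a j) := AHR.reg_unique m hm0 a h1 h6
      rw [Prod.mk.injEq]
      exact ⟨by rw [← h5, ← this], rfl⟩
    right_inv := fun b => rfl }
  have eQ : {ab : X // base ab ∧ q ab} ≃ AHR.Mset m :=
  { toFun := fun z => ⟨z.1.1, z.2.1.1, z.2.1.2.2.1⟩
    invFun := fun a => ⟨(a.1, AHR.reg m (∑ j, a.1 j)),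
      ⟨a.2.1, AHR.reg_mono m _, a.2.2,
        AHR.reg_le m _ hm0 (sum_le a.1 a.2.2), by rw [AHR.sum_reg m _ hm0]⟩,
      fun i j => AHR.reg_ar m _ i j⟩
    left_inv := by
      rintro ⟨⟨a, b⟩, ⟨h1, h2, h3, h4, h5⟩, h6⟩
      apply Subtype.ext
      show (a, AHR.reg m (∑ j, a j)) = (a, b)
      have : b = AHR.reg m (∑ j, b j) := AHR.reg_unique m hm0 b h2 h6
      rw [Prod.mk.injEq]
      exact ⟨rfl, by rw [h5, ← this]⟩
    right_inv := fun a => rfl }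
  have eB : {ab : X // base ab ∧ p ab ∧ q ab} ≃ Fin (m * m + 1) :=
  { toFun := fun z => ⟨∑ j, z.1.1 j, by
      have := sum_le z.1.1 z.2.1.2.2.1; omega⟩
    invFun := fun S => ⟨(AHR.reg m S.val, AHR.reg m S.val),
      ⟨AHR.reg_mono m _, AHR.reg_mono m _,
        AHR.reg_le m _ hm0 (by have := S.isLt; omega), AHR.reg_le m _ hm0 (by have := S.isLt; omega),
        rfl⟩,
      fun i j => AHR.reg_ar m _ i j, fun i j => AHR.reg_ar m _ i j⟩
    left_inv := by
      rintro ⟨⟨a, b⟩, ⟨h1, h2, h3, h4, h5⟩, h6, h7⟩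
      apply Subtype.ext
      show (AHR.reg m (∑ j, a j), AHR.reg m (∑ j, a j)) = (a, b)
      have ha : a = AHR.reg m (∑ j, a j) := AHR.reg_unique m hm0 a h1 h6
      have hb : b = AHR.reg m (∑ j, b j) := AHR.reg_unique m hm0 b h2 h7
      rw [Prod.mk.injEq]
      exact ⟨ha.symm, by rw [h5, ← hb]⟩
    right_inv := by
      intro S
      apply Fin.ext
      show ∑ j, AHR.reg m S.val j = S.val
      exact AHR.sum_reg m _ hm0 }
  have finM : Finite (AHR.Mset m) := Finite.of_equiv _ (AHR.MEquiv m hm0).symm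
  have finP : Finite {ab : X // base ab ∧ p ab} := Finite.of_equiv _ eP.symm
  have finQ : Finite {ab : X // base ab ∧ q ab} := Finite.of_equiv _ eQ.symm
  have finB : Finite {ab : X // base ab ∧ p ab ∧ q ab} := Finite.of_equiv _ eB.symm
  have eSum := AHR.orEquiv base p q
  have finPQ : Finite ({ab : X // base ab ∧ p ab} ⊕ {ab : X // base ab ∧ q ab}) := by infer_instance
  have finTB : Finite ({ab : X // base ab ∧ (p ab ∨ q ab)} ⊕ {ab : X // base ab ∧ p ab ∧ q ab}) :=
    Finite.of_equiv _ eSum.symm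
  have finT : Finite {ab : X // base ab ∧ (p ab ∨ q ab)} := by
    have : Function.Injective
        (Sum.inl : {ab : X // base ab ∧ (p ab ∨ q ab)} →
          ({ab : X // base ab ∧ (p ab ∨ q ab)} ⊕ {ab : X // base ab ∧ p ab ∧ q ab})) :=
      Sum.inl_injective
    exact Finite.of_injective _ this
  have hcardsum : Nat.card ({ab : X // base ab ∧ (p ab ∨ q ab)} ⊕ {ab : X // base ab ∧ p ab ∧ q ab})
      = Nat.card ({ab : X // base ab ∧ p ab} ⊕ {ab : X // base ab ∧ q ab}) := Nat.card_congr eSum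
  rw [Nat.card_sum, Nat.card_sum] at hcardsum
  have hB : Nat.card {ab : X // base ab ∧ p ab ∧ q ab} = m * m + 1 := by
    rw [Nat.card_congr eB]
    simp
  have hP : Nat.card {ab : X // base ab ∧ p ab} = (2*m).choose m := by
    rw [Nat.card_congr eP]; exact AHR.card_Mset m hm0
  have hQ : Nat.card {ab : X // base ab ∧ q ab} = (2*m).choose m := by
    rw [Nat.card_congr eQ]; exact AHR.card_Mset m hm0
  have hpow : m ^ 2 = m * m := pow_two m
  omega
end

section
/- Let m ≥ 1 and let a, b : {1,…,m} → ℕ be sequences such that b_i ≤ m for all i, a is almost regular (|a_i − a_j| ≤ 1 for all i, j), and Σ_i a_i = Σ_i b_i. Then (a, b) is a graphical bipartite degree sequence: there exists a bipartite graph on parts U, W with |U| = |W| = m whose degrees on U are given by a and whose degrees on W are given by b. -/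
/-- There is a set of `d` "top" indices for `a`. -/
lemma exists_top_set (m : ℕ) (a : Fin m → ℕ) :
    ∀ d, d ≤ m → ∃ S : Finset (Fin m), S.card = d ∧
      ∀ i ∈ S, ∀ j ∉ S, a j ≤ a i := by
  intro d
  induction d with
  | zero => intro _; exact ⟨∅, Finset.card_empty, by simp⟩
  | succ d ih =>
    intro hd
    obtain ⟨S, hScard, hStop⟩ := ih (Nat.le_of_succ_le hd)
    have hne : (Finset.univ \ S).Nonempty := by
      rw [Finset.sdiff_nonempty]
      intro hsub
      have := Finset.card_le_card hsub
      simp [hScard] at this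
      omega
    obtain ⟨i, hiS, hmax⟩ := Finset.exists_max_image (Finset.univ \ S) a hne
    have hiS' : i ∉ S := (Finset.mem_sdiff.mp hiS).2
    refine ⟨insert i S, ?_, ?_⟩
    · rw [Finset.card_insert_of_notMem hiS', hScard]
    · intro i' hi' j hj
      have hjS : j ∉ S := fun h => hj (Finset.mem_insert_of_mem h)
      rcases Finset.mem_insert.mp hi' with rfl | hi'
      · exact hmax j (Finset.mem_sdiff.mpr ⟨Finset.mem_univ _, hjS⟩)
      · exact hStop i' hi' j hjS

lemma almost_regular_aux (m : ℕ) : ∀ n : ℕ, ∀ a b : Fin m → ℕ,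
    (∀ i, b i ≤ m) →
    (∀ i j, a i ≤ a j + 1) →
    (∑ i, a i = ∑ i, b i) →
    (∑ i, b i = n) →
    ∃ E : Finset (Fin m × Fin m),
      (∀ i, (E.filter (fun p => p.1 = i)).card = a i) ∧
      (∀ j, (E.filter (fun p => p.2 = j)).card = b j) := by
  intro n
  induction n using Nat.strong_induction_on with
  | _ n IH =>
    intro a b hb ha hsum hn
    rcases Nat.eq_zero_or_pos n with rfl | hpos
    · -- all zero
      have hbz : ∀ j, b j = 0 := by
        intro j
        have := Finset.single_le_sum (f := b) (fun i _ => Nat.zero_le _) (Finset.mem_univ j)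
        omega
      have haz : ∀ i, a i = 0 := by
        intro i
        have := Finset.single_le_sum (f := a) (fun i _ => Nat.zero_le _) (Finset.mem_univ i)
        omega
      exact ⟨∅, fun i => by simp [haz i], fun j => by simp [hbz j]⟩
    · -- choose a column with positive degree
      have : ∃ j0, 0 < b j0 := by
        by_contra h
        push_neg at h
        have : ∑ i, b i = 0 := Finset.sum_eq_zero (fun j _ => Nat.le_zero.mp (h j))
        omega
      obtain ⟨j0, hj0⟩ := this
      set d := b j0 with hd
      have hdm : d ≤ m := hb j0
      obtain ⟨S, hScard, hStop⟩ := exists_top_set m a d hdm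
      have hsumad : d ≤ ∑ i, a i := by
        rw [hsum]
        exact Finset.single_le_sum (fun i _ => Nat.zero_le _) (Finset.mem_univ j0)
      -- every element of S has positive degree
      have hSpos : ∀ i ∈ S, 1 ≤ a i := by
        intro i hi
        by_contra h
        push_neg at h
        have hai : a i = 0 := by omega
        have houtside : ∀ j ∉ S, a j = 0 := fun j hj => by
          have := hStop i hi j hj; omega
        have hle : ∑ k, a k ≤ ∑ k ∈ S, a k := by
          rw [← Finset.sum_subset (Finset.subset_univ S) (fun j _ hj => houtside j hj)]
        have hlt : ∑ k ∈ S, a k < ∑ k ∈ S, 1 := by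
          apply Finset.sum_lt_sum
          · intro k hk
            have := ha k i
            omega
          · exact ⟨i, hi, by omega⟩
        simp [hScard] at hlt
        omega
      -- new sequences
      set a' : Fin m → ℕ := fun i => a i - (if i ∈ S then 1 else 0) with ha'
      set b' : Fin m → ℕ := Function.update b j0 0 with hb'
      have ha'val : ∀ i, a' i + (if i ∈ S then 1 else 0) = a i := by
        intro i
        by_cases h : i ∈ S <;> simp [ha', h]
        have := hSpos i h
        omega
      have ha'reg : ∀ i j, a' i ≤ a' j + 1 := by
        intro i j
        have h1 := ha i j
        have h2 := ha'val i
        have h3 := ha'val j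
        by_cases hi : i ∈ S <;> by_cases hj : j ∈ S <;>
          simp only [hi, hj, if_true, if_false] at h2 h3
        · omega
        · omega
        · have h4 := hStop j hj i hi
          have h5 := hSpos j hj
          omega
        · omega
      have hsuma' : ∑ i, a' i + d = ∑ i, a i := by
        have h1 : ∑ i, (a' i + if i ∈ S then 1 else 0) = ∑ i, a i :=
          Finset.sum_congr rfl (fun i _ => ha'val i)
        rw [Finset.sum_add_distrib] at h1
        have h2 : ∑ i, (if i ∈ S then (1:ℕ) else 0) = S.card := by
          rw [Finset.sum_ite_mem, Finset.univ_inter, Finset.card_eq_sum_ones]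
        rw [h2, hScard] at h1
        exact h1
      have hsumb' : ∑ i, b' i + d = ∑ i, b i := by
        have h1 : ∑ i, b' i = 0 + ∑ i ∈ Finset.univ.erase j0, b i := by
          rw [hb', Finset.sum_update_of_mem (Finset.mem_univ j0)]
          simp [Finset.sdiff_singleton_eq_erase]
        have h2 : ∑ i, b i = b j0 + ∑ i ∈ Finset.univ.erase j0, b i :=
          (Finset.add_sum_erase _ b (Finset.mem_univ j0)).symm
        omega
      have hb'le : ∀ j, b' j ≤ m := by
        intro j
        by_cases h : j = j0 <;> simp [hb', h, hb j]
      have hsum' : ∑ i, a' i = ∑ i, b' i := by omega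
      have hlt : ∑ i, b' i < n := by omega
      obtain ⟨E', hE1, hE2⟩ := IH (∑ i, b' i) hlt a' b' hb'le ha'reg hsum' rfl
      -- new edges
      set T : Finset (Fin m × Fin m) := S.image (fun i => (i, j0)) with hT
      have hinj : Function.Injective (fun i : Fin m => (i, j0)) := by
        intro x y h
        simpa using congrArg Prod.fst h
      have hE'j0 : E'.filter (fun p => p.2 = j0) = ∅ := by
        apply Finset.card_eq_zero.mp
        rw [hE2 j0]
        simp [hb']
      have hdisj : Disjoint E' T := by
        rw [Finset.disjoint_left]
        intro p hp hpT
        obtain ⟨i, hi, hip⟩ := Finset.mem_image.mp hpT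
        have hp2 : p.2 = j0 := by rw [← hip]
        have : p ∈ E'.filter (fun p => p.2 = j0) := Finset.mem_filter.mpr ⟨hp, hp2⟩
        rw [hE'j0] at this
        exact absurd this (Finset.notMem_empty p)
      refine ⟨E' ∪ T, ?_, ?_⟩
      · intro i
        rw [Finset.filter_union,
          Finset.card_union_of_disjoint
            (Finset.disjoint_filter_filter hdisj),
          hE1 i]
        have hTf : (T.filter (fun p => p.1 = i)).card = if i ∈ S then 1 else 0 := by
          rw [hT, Finset.filter_image]
          simp only []
          rw [Finset.card_image_of_injective _ hinj]
          have : (S.filter (fun x => (x, j0).1 = i)) = S.filter (fun x => x = i) := rfl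
          rw [this, Finset.filter_eq']
          by_cases h : i ∈ S <;> simp [h]
        rw [hTf]
        exact ha'val i
      · intro j
        rw [Finset.filter_union,
          Finset.card_union_of_disjoint
            (Finset.disjoint_filter_filter hdisj),
          hE2 j]
        have hTf : (T.filter (fun p => p.2 = j)).card = if j = j0 then d else 0 := by
          rw [hT, Finset.filter_image]
          by_cases h : j = j0
          · subst h
            simp [Finset.card_image_of_injective _ hinj, hScard]
          · have : (fun x : Fin m => (x, j0).2 = j) = fun _ => False := by
              funext x
              simp [Ne.symm h]
            simp [h, Ne.symm h]
        rw [hTf]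
        by_cases h : j = j0
        · subst h
          simp [hb', hd]
        · simp [hb', h]

/-- **Gale–Ryser for almost regular sequences.**  Let `m ≥ 1` and let
`a, b : Fin m → ℕ` be sequences with `b i ≤ m` for all `i`, `a` almost regular
(`|a i − a j| ≤ 1` for all `i, j`), and `∑ a = ∑ b`.  Then `(a, b)` is a graphical
bipartite degree sequence: there is a bipartite graph on parts of sizes `m` and `m`
(modelled by its edge set `E ⊆ Fin m × Fin m`) whose degrees on the primary side are
given by `a` and on the secondary side by `b`. -/
theorem almost_regular_bipartite_graphical (m : ℕ) (hm : 1 ≤ m)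
    (a b : Fin m → ℕ)
    (hb : ∀ i, b i ≤ m)
    (ha : ∀ i j, a i ≤ a j + 1)
    (hsum : ∑ i, a i = ∑ i, b i) :
    ∃ E : Finset (Fin m × Fin m),
      (∀ i, (E.filter (fun p => p.1 = i)).card = a i) ∧
      (∀ j, (E.filter (fun p => p.2 = j)).card = b j) := by
  exact almost_regular_aux m (∑ i, b i) a b hb ha hsum rfl
end

section
/- Let k ≥ 1 and n ≥ 1, and let 𝔡₁, …, 𝔡ₙ and 𝔣₁, …, 𝔣ₙ be splitted bipartite degree sequences, each a pair of multisets of natural numbers of cardinality k on both the primary and the secondary side, and each realizable by a bipartite graph on parts of sizes k and k having at least one edge. If 𝔡_i ≠ 𝔣_i for some index i, then 𝔡₁ ∘ 𝔡₂ ∘ … ∘ 𝔡ₙ ≠ 𝔣₁ ∘ 𝔣₂ ∘ … ∘ 𝔣ₙ. -/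
/-- The bipartite composition of splitted bipartite degree sequences
`𝔡 = (u, w)` and `𝔣 = (x, y)`: `𝔡 ∘ 𝔣 = (u' + x, w + y')`, where `u'` adds `|y|` to
every element of `u` and `y'` adds `|u|` to every element of `y`. -/
def bipComp (d f : Multiset ℕ × Multiset ℕ) : Multiset ℕ × Multiset ℕ :=
  (d.1.map (· + Multiset.card f.2) + f.1, d.2 + f.2.map (· + Multiset.card d.1))

/-- The composition `d₁ ∘ d₂ ∘ ⋯ ∘ dₙ` of a list of splitted bipartite degree
sequences (`bipComp` is associative, so the bracketing is immaterial). -/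
def bipCompList : List (Multiset ℕ × Multiset ℕ) → Multiset ℕ × Multiset ℕ
  | [] => (0, 0)
  | [d] => d
  | d :: l@(_ :: _) => bipComp d (bipCompList l)

/-- `𝔡` is realizable on parts of sizes `k` and `k` with at least one edge: there is
a nonempty edge set `E ⊆ Fin k × Fin k` whose multiset of degrees on the primary side
is `𝔡.1` and on the secondary side is `𝔡.2`. -/
def RealizableWithEdge (k : ℕ) (d : Multiset ℕ × Multiset ℕ) : Prop :=
  ∃ E : Finset (Fin k × Fin k), E.Nonempty ∧
    Multiset.map (fun i => (E.filter (fun p => p.1 = i)).card) Finset.univ.val = d.1 ∧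
    Multiset.map (fun j => (E.filter (fun p => p.2 = j)).card) Finset.univ.val = d.2

namespace BipAux
open Multiset

lemma countP_split (a : ℕ) (u : Multiset ℕ) :
    u.countP (fun x => a ≤ x) = u.count a + u.countP (fun x => a + 1 ≤ x) := by
  induction u using Multiset.induction_on with
  | empty => simp
  | cons b s ih =>
    rw [countP_cons, countP_cons, count_cons]
    split_ifs <;> omega

lemma eq_of_countP (X Y : Multiset ℕ)
    (h : ∀ a, X.countP (fun x => a ≤ x) = Y.countP (fun x => a ≤ x)) : X = Y := by
  ext a
  have h1 := h a
  have h2 := h (a + 1)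
  have e1 := countP_split a X
  have e2 := countP_split a Y
  omega

lemma countP_shift (m a : ℕ) (u : Multiset ℕ) :
    (u.map (· + m)).countP (fun x => m + a ≤ x) = u.countP (fun x => a ≤ x) := by
  rw [countP_map, ← countP_eq_card_filter]
  refine countP_congr rfl (fun x _ => ?_)
  rw [eq_iff_iff]
  constructor <;> intro h <;> omega

lemma card_of_countP_zero (X : Multiset ℕ) :
    X.countP (fun x => 0 ≤ x) = Multiset.card X :=
  countP_eq_card.mpr fun _ _ => Nat.zero_le _

lemma lemA (m : ℕ) (u v X Y : Multiset ℕ) (hX : ∀ x ∈ X, x ≤ m) (hY : ∀ x ∈ Y, x ≤ m)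
    (hcard : Multiset.card u = Multiset.card v)
    (h : u.map (· + m) + X = v.map (· + m) + Y) : u = v ∧ X = Y := by
  have huv : u = v := by
    apply eq_of_countP
    intro a
    rcases Nat.eq_zero_or_pos a with ha | ha
    · subst ha
      rw [card_of_countP_zero, card_of_countP_zero, hcard]
    · have hzX : X.countP (fun x => m + a ≤ x) = 0 :=
        countP_eq_zero.mpr (fun x hx => by have := hX x hx; omega)
      have hzY : Y.countP (fun x => m + a ≤ x) = 0 :=
        countP_eq_zero.mpr (fun x hx => by have := hY x hx; omega)
      have hc := congrArg (countP (fun x => m + a ≤ x)) h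
      rw [countP_add, countP_add, hzX, hzY, countP_shift, countP_shift] at hc
      omega
  subst huv
  exact ⟨rfl, add_left_cancel h⟩

lemma lemA' (m : ℕ) (u v X Y : Multiset ℕ) (hu : ∀ x ∈ u, x ≤ m) (hv : ∀ x ∈ v, x ≤ m)
    (hcard : Multiset.card u = Multiset.card v)
    (h : u + X.map (· + m) = v + Y.map (· + m)) : u = v ∧ X = Y := by
  have hXY : X = Y := by
    apply eq_of_countP
    intro a
    rcases Nat.eq_zero_or_pos a with ha | ha
    · subst ha
      have := congrArg Multiset.card h
      simp only [card_add, card_map] at this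
      rw [card_of_countP_zero, card_of_countP_zero]
      omega
    · have hzu : u.countP (fun x => m + a ≤ x) = 0 :=
        countP_eq_zero.mpr (fun x hx => by have := hu x hx; omega)
      have hzv : v.countP (fun x => m + a ≤ x) = 0 :=
        countP_eq_zero.mpr (fun x hx => by have := hv x hx; omega)
      have hc := congrArg (countP (fun x => m + a ≤ x)) h
      rw [countP_add, countP_add, hzu, hzv, countP_shift, countP_shift] at hc
      omega
  subst hXY
  exact ⟨add_right_cancel h, rfl⟩

/-- Good block: cardinality `k` on both sides, entries bounded by `k`. -/
def Good (k : ℕ) (d : Multiset ℕ × Multiset ℕ) : Prop :=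
  Multiset.card d.1 = k ∧ Multiset.card d.2 = k ∧ (∀ x ∈ d.1, x ≤ k) ∧ (∀ x ∈ d.2, x ≤ k)

lemma bipCompList_cons (d : Multiset ℕ × Multiset ℕ) (l : List (Multiset ℕ × Multiset ℕ)) :
    bipCompList (d :: l) = bipComp d (bipCompList l) := by
  cases l with
  | nil => simp [bipCompList, bipComp]
  | cons e t => simp [bipCompList]

lemma bounds (k : ℕ) : ∀ L : List (Multiset ℕ × Multiset ℕ), (∀ d ∈ L, Good k d) →
    Multiset.card (bipCompList L).1 = L.length * k ∧
    Multiset.card (bipCompList L).2 = L.length * k ∧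
    (∀ x ∈ (bipCompList L).1, x ≤ L.length * k) ∧
    (∀ x ∈ (bipCompList L).2, x ≤ L.length * k) := by
  intro L
  induction L with
  | nil => intro _; simp [bipCompList]
  | cons d L ih =>
    intro hG
    obtain ⟨hd1, hd2, hb1, hb2⟩ := hG d List.mem_cons_self
    obtain ⟨hc1, hc2, hB1, hB2⟩ := ih (fun e he => hG e (List.mem_cons_of_mem d he))
    rw [bipCompList_cons]
    refine ⟨?_, ?_, ?_, ?_⟩
    · simp only [bipComp, card_add, card_map, hd1, hc1, List.length_cons]; ring
    · simp only [bipComp, card_add, card_map, hd2, hc2, List.length_cons]; ring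
    · intro x hx
      simp only [bipComp, Multiset.mem_add, Multiset.mem_map] at hx
      rcases hx with ⟨y, hy, rfl⟩ | hx
      · have := hb1 y hy
        rw [hc2]
        simp only [List.length_cons]
        nlinarith
      · have := hB1 x hx
        simp only [List.length_cons]
        nlinarith
    · intro x hx
      simp only [bipComp, Multiset.mem_add, Multiset.mem_map] at hx
      rcases hx with hx | ⟨y, hy, rfl⟩
      · have := hb2 x hx
        simp only [List.length_cons]
        nlinarith
      · have := hB2 y hy
        rw [hd1]
        simp only [List.length_cons]
        nlinarith

lemma main_list (k : ℕ) : ∀ (L M : List (Multiset ℕ × Multiset ℕ)),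
    L.length = M.length → (∀ d ∈ L, Good k d) → (∀ d ∈ M, Good k d) →
    bipCompList L = bipCompList M → L = M := by
  intro L
  induction L with
  | nil =>
    intro M hlen _ _ _
    cases M with
    | nil => rfl
    | cons f M => simp at hlen
  | cons d L ih =>
    intro M hlen hGL hGM h
    cases M with
    | nil => simp at hlen
    | cons f M =>
      have hlen' : L.length = M.length := by simpa using hlen
      obtain ⟨hd1, hd2, hb1, hb2⟩ := hGL d List.mem_cons_self
      obtain ⟨hf1, hf2, hc1, hc2⟩ := hGM f List.mem_cons_self
      obtain ⟨hX1, hX2, hXb1, hXb2⟩ := bounds k L (fun e he => hGL e (List.mem_cons_of_mem d he))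
      obtain ⟨hY1, hY2, hYb1, hYb2⟩ := bounds k M (fun e he => hGM e (List.mem_cons_of_mem f he))
      rw [bipCompList_cons, bipCompList_cons] at h
      set X := bipCompList L with hXdef
      set Y := bipCompList M with hYdef
      have h2 := congrArg Prod.snd h
      simp only [bipComp] at h2
      rw [hd1, hf1] at h2
      obtain ⟨h2a, h2b⟩ := lemA' k d.2 f.2 X.2 Y.2 hb2 hc2 (hd2.trans hf2.symm) h2
      have h1 := congrArg Prod.fst h
      simp only [bipComp] at h1
      rw [hX2, hY2, hlen'] at h1
      obtain ⟨h1a, h1b⟩ := lemA (M.length * k) d.1 f.1 X.1 Y.1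
        (fun x hx => hlen' ▸ hXb1 x hx) hYb1 (hd1.trans hf1.symm) h1
      have hdf : d = f := Prod.ext h1a h2a
      have hXY : X = Y := Prod.ext h1b h2b
      have hLM : L = M := ih M hlen' (fun e he => hGL e (List.mem_cons_of_mem d he))
        (fun e he => hGM e (List.mem_cons_of_mem f he)) hXY
      rw [hdf, hLM]

lemma real_bound (k : ℕ) (d : Multiset ℕ × Multiset ℕ) (h : RealizableWithEdge k d) :
    (∀ x ∈ d.1, x ≤ k) ∧ (∀ x ∈ d.2, x ≤ k) := by
  obtain ⟨E, -, h1, h2⟩ := h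
  constructor
  · intro x hx
    rw [← h1] at hx
    obtain ⟨i, -, rfl⟩ := Multiset.mem_map.mp hx
    refine le_trans (Finset.card_le_card_of_injOn (fun p => p.2)
      (fun p _ => Finset.mem_univ _) ?_) (by simp)
    intro p hp q hq hpq
    simp only [Finset.mem_coe, Finset.mem_filter] at hp hq
    exact Prod.ext (hp.2.trans hq.2.symm) hpq
  · intro x hx
    rw [← h2] at hx
    obtain ⟨j, -, rfl⟩ := Multiset.mem_map.mp hx
    refine le_trans (Finset.card_le_card_of_injOn (fun p => p.1)
      (fun p _ => Finset.mem_univ _) ?_) (by simp)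
    intro p hp q hq hpq
    simp only [Finset.mem_coe, Finset.mem_filter] at hp hq
    exact Prod.ext hpq (hp.2.trans hq.2.symm)

end BipAux

/-- **Uniqueness of compositions of equal-size factors.**  Let `𝔡₁, …, 𝔡ₙ` and
`𝔣₁, …, 𝔣ₙ` be splitted bipartite degree sequences, each a pair of multisets of
cardinality `k` on both sides and each realizable by a bipartite graph on parts of
sizes `k` and `k` having at least one edge.  If `𝔡 i ≠ 𝔣 i` for some `i`, then
`𝔡₁ ∘ ⋯ ∘ 𝔡ₙ ≠ 𝔣₁ ∘ ⋯ ∘ 𝔣ₙ`. -/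
theorem bipCompList_injective_of_fixed_size
    (k n : ℕ) (hk : 1 ≤ k) (hn : 1 ≤ n)
    (𝔡 𝔣 : Fin n → Multiset ℕ × Multiset ℕ)
    (hcard𝔡 : ∀ i, Multiset.card (𝔡 i).1 = k ∧ Multiset.card (𝔡 i).2 = k)
    (hcard𝔣 : ∀ i, Multiset.card (𝔣 i).1 = k ∧ Multiset.card (𝔣 i).2 = k)
    (hreal𝔡 : ∀ i, RealizableWithEdge k (𝔡 i))
    (hreal𝔣 : ∀ i, RealizableWithEdge k (𝔣 i))
    (hne : ∃ i, 𝔡 i ≠ 𝔣 i) :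
    bipCompList (List.ofFn 𝔡) ≠ bipCompList (List.ofFn 𝔣) := by
  intro h
  obtain ⟨i, hi⟩ := hne
  have hGd : ∀ d ∈ List.ofFn 𝔡, BipAux.Good k d := by
    intro d hd
    obtain ⟨j, rfl⟩ := List.mem_ofFn.mp hd
    exact ⟨(hcard𝔡 j).1, (hcard𝔡 j).2, (BipAux.real_bound k _ (hreal𝔡 j)).1,
      (BipAux.real_bound k _ (hreal𝔡 j)).2⟩
  have hGf : ∀ d ∈ List.ofFn 𝔣, BipAux.Good k d := by
    intro d hd
    obtain ⟨j, rfl⟩ := List.mem_ofFn.mp hd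
    exact ⟨(hcard𝔣 j).1, (hcard𝔣 j).2, (BipAux.real_bound k _ (hreal𝔣 j)).1,
      (BipAux.real_bound k _ (hreal𝔣 j)).2⟩
  have hLM := BipAux.main_list k (List.ofFn 𝔡) (List.ofFn 𝔣) (by simp) hGd hGf h
  exact hi (congrFun (List.ofFn_injective hLM) i)
end

section
/- Let k and n be positive integers with k dividing n. Let N(k) be the number of splitted bipartite degree sequences (pairs of multisets of natural numbers, each of cardinality k) realizable by a bipartite graph on parts of sizes k and k having at least one edge, and let N*(n) be the number of pairs of multisets of natural numbers, each of cardinality n, realizable by a bipartite graph on parts of sizes n and n. Then N*(n) ≥ N(k)^{n/k}. -/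
/-- `𝔡` is realizable on parts of sizes `k` and `k`: there is an edge set
`E ⊆ Fin k × Fin k` whose multiset of degrees on the primary side is `𝔡.1` and on the
secondary side is `𝔡.2`. -/
def Realizable (k : ℕ) (d : Multiset ℕ × Multiset ℕ) : Prop :=
  ∃ E : Finset (Fin k × Fin k),
    Multiset.map (fun i => (E.filter (fun p => p.1 = i)).card) Finset.univ.val = d.1 ∧
    Multiset.map (fun j => (E.filter (fun p => p.2 = j)).card) Finset.univ.val = d.2

lemma split_part_eq {c : ℕ} (A L : Multiset ℕ)
    (hA : ∀ x ∈ A, c ≤ x) (hL : ∀ x ∈ L, x ≤ c) :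
    A = (A + L).filter (c < ·) +
        Multiset.replicate (Multiset.card A - Multiset.card ((A + L).filter (c < ·))) c := by
  have hLf : L.filter (c < ·) = 0 := by
    rw [Multiset.filter_eq_nil]
    intro x hx
    exact not_lt.mpr (hL x hx)
  have h1 : (A + L).filter (c < ·) = A.filter (c < ·) := by
    rw [Multiset.filter_add, hLf, add_zero]
  rw [h1]
  have h2 : A.filter (fun x => ¬ c < x) = Multiset.replicate
      (Multiset.card A - Multiset.card (A.filter (c < ·))) c := by
    rw [Multiset.eq_replicate]
    constructor
    · have : Multiset.card (A.filter (c < ·)) + Multiset.card (A.filter (fun x => ¬ c < x)) = Multiset.card A := by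
        rw [← Multiset.card_add, Multiset.filter_add_not]
      omega
    · intro x hx
      have hm := Multiset.mem_filter.mp hx
      have := hA x hm.1
      omega
  conv_lhs => rw [← Multiset.filter_add_not (c < ·) A]
  rw [h2]

lemma split_unique {c : ℕ} {A A' L L' : Multiset ℕ}
    (hA : ∀ x ∈ A, c ≤ x) (hA' : ∀ x ∈ A', c ≤ x)
    (hL : ∀ x ∈ L, x ≤ c) (hL' : ∀ x ∈ L', x ≤ c)
    (hcard : Multiset.card A = Multiset.card A')
    (h : A + L = A' + L') : A = A' ∧ L = L' := by
  have e1 := split_part_eq A L hA hL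
  have e2 := split_part_eq A' L' hA' hL'
  rw [← h, ← hcard] at e2
  have hAA : A = A' := e1.trans e2.symm
  refine ⟨hAA, ?_⟩
  rw [hAA] at h
  exact add_left_cancel h

lemma comp_inj (k : ℕ) : ∀ (m : ℕ) (u u' : Fin m → Multiset ℕ),
    (∀ a, Multiset.card (u a) = k) → (∀ a, ∀ x ∈ u a, x ≤ k) →
    (∀ a, Multiset.card (u' a) = k) → (∀ a, ∀ x ∈ u' a, x ≤ k) →
    (∑ a, (u a).map (· + a.val * k)) = (∑ a, (u' a).map (· + a.val * k)) →
    u = u' := by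
  intro m
  induction m with
  | zero => intro u u' _ _ _ _ _; funext a; exact a.elim0
  | succ m ih =>
    intro u u' hc hb hc' hb' h
    rw [Fin.sum_univ_castSucc, Fin.sum_univ_castSucc] at h
    set A := (u (Fin.last m)).map (· + m * k) with hA
    set A' := (u' (Fin.last m)).map (· + m * k) with hA'
    set L := ∑ a : Fin m, (u a.castSucc).map (· + a.val * k) with hL
    set L' := ∑ a : Fin m, (u' a.castSucc).map (· + a.val * k) with hL'
    have memL : ∀ (v : Fin (m+1) → Multiset ℕ), (∀ a, ∀ x ∈ v a, x ≤ k) →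
        ∀ x ∈ (∑ a : Fin m, (v a.castSucc).map (· + a.val * k)), x ≤ m * k := by
      intro v hv x hx
      rw [Multiset.mem_sum] at hx
      obtain ⟨a, -, hx⟩ := hx
      rw [Multiset.mem_map] at hx
      obtain ⟨y, hy, rfl⟩ := hx
      have h1 := hv a.castSucc y hy
      have h2 : a.val + 1 ≤ m := a.isLt
      calc y + a.val * k ≤ k + a.val * k := by omega
        _ = (a.val + 1) * k := by ring
        _ ≤ m * k := Nat.mul_le_mul_right k h2
    have memA : ∀ (B : Multiset ℕ), ∀ x ∈ B.map (· + m * k), m * k ≤ x := by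
      intro B x hx
      rw [Multiset.mem_map] at hx
      obtain ⟨y, -, rfl⟩ := hx
      omega
    have h' : A + L = A' + L' := by
      rw [add_comm A L, add_comm A' L']
      simpa using h
    have key := split_unique (memA _) (memA _) (memL u hb) (memL u' hb')
      (by simp [hc, hc']) h'
    have hlast : u (Fin.last m) = u' (Fin.last m) := by
      exact Multiset.map_injective (add_left_injective (m * k)) key.1
    have hrest := ih (fun a => u a.castSucc) (fun a => u' a.castSucc)
      (fun a => hc _) (fun a => hb _) (fun a => hc' _) (fun a => hb' _) key.2
    funext a
    induction a using Fin.lastCases with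
    | last => exact hlast
    | cast a => exact congrFun hrest a

lemma fst_card {α β : Type} [DecidableEq α] [DecidableEq β] [Fintype β]
    (E : Finset (α × β)) (i : α) :
    (E.filter fun p => p.1 = i).card = (Finset.univ.filter fun j : β => (i, j) ∈ E).card := by
  refine Finset.card_bij' (fun p _ => p.2) (fun j _ => (i, j)) ?_ ?_ ?_ ?_
  · rintro ⟨a, b⟩ hp
    rw [Finset.mem_filter] at hp ⊢
    obtain ⟨h1, h2⟩ := hp
    dsimp at h2 ⊢
    subst h2
    exact ⟨Finset.mem_univ _, h1⟩
  · intro j hj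
    rw [Finset.mem_filter] at hj ⊢
    exact ⟨hj.2, rfl⟩
  · rintro ⟨a, b⟩ hp
    rw [Finset.mem_filter] at hp
    obtain ⟨-, h2⟩ := hp
    dsimp at h2 ⊢
    subst h2
    rfl
  · intro j _
    rfl
lemma snd_card {α β : Type} [DecidableEq α] [DecidableEq β] [Fintype α]
    (E : Finset (α × β)) (j : β) :
    (E.filter fun p => p.2 = j).card = (Finset.univ.filter fun i : α => (i, j) ∈ E).card := by
  refine Finset.card_bij' (fun p _ => p.1) (fun i _ => (i, j)) ?_ ?_ ?_ ?_
  · rintro ⟨a, b⟩ hp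
    rw [Finset.mem_filter] at hp ⊢
    obtain ⟨h1, h2⟩ := hp
    dsimp at h2 ⊢
    subst h2
    exact ⟨Finset.mem_univ _, h1⟩
  · intro i hi
    rw [Finset.mem_filter] at hi ⊢
    exact ⟨hi.2, rfl⟩
  · rintro ⟨a, b⟩ hp
    rw [Finset.mem_filter] at hp
    obtain ⟨-, h2⟩ := hp
    dsimp at h2 ⊢
    subst h2
    rfl
  · intro i _
    rfl

lemma prod_univ_map {γ δ : Type} [Fintype γ] [Fintype δ] (f : γ × δ → ℕ) :
    (Finset.univ : Finset (γ × δ)).val.map f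
      = ∑ a : γ, (Finset.univ : Finset δ).val.map (fun b => f (a, b)) := by
  rw [← Finset.univ_product_univ]
  rw [Finset.product_val, Finset.sum]
  show Multiset.map f (Multiset.product _ _) = _
  rw [Multiset.product, Multiset.map_bind, Multiset.bind, Multiset.join]
  simp [Multiset.map_map]

lemma realizable_comp (k m : ℕ) (E : Fin m → Finset (Fin k × Fin k)) :
    ∃ F : Finset ((Fin m × Fin k) × (Fin m × Fin k)),
      (Finset.univ.val.map fun i => (F.filter fun p => p.1 = i).card)
        = ∑ a : Fin m, ((Finset.univ.val.map fun i : Fin k =>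
            ((E a).filter fun p => p.1 = i).card).map (· + (m - 1 - a.val) * k)) ∧
      (Finset.univ.val.map fun j => (F.filter fun p => p.2 = j).card)
        = ∑ a : Fin m, ((Finset.univ.val.map fun j : Fin k =>
            ((E a).filter fun p => p.2 = j).card).map (· + a.val * k)) := by
  classical
  set F : Finset ((Fin m × Fin k) × (Fin m × Fin k)) :=
    Finset.univ.filter (fun p => (p.1.1 = p.2.1 ∧ (p.1.2, p.2.2) ∈ E p.1.1) ∨ p.1.1 < p.2.1)
    with hF
  have key1 : ∀ (a : Fin m) (i : Fin k), (F.filter fun p => p.1 = (a, i)).card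
      = ((E a).filter fun p => p.1 = i).card + (m - 1 - a.val) * k := by
    intro a i
    rw [fst_card]
    have hmem : ∀ q : Fin m × Fin k, (((a, i), q) ∈ F) ↔
        ((a = q.1 ∧ (i, q.2) ∈ E a) ∨ a < q.1) := by
      intro q; simp [hF]
    rw [Finset.filter_congr (fun q _ => by rw [hmem q])]
    rw [Finset.card_filter, Fintype.sum_prod_type]
    have step : ∀ b : Fin m, (∑ j : Fin k, if (a = b ∧ (i, j) ∈ E a) ∨ a < b then 1 else 0)
        = (if a = b then ((E a).filter fun p => p.1 = i).card else 0)
          + (if a < b then k else 0) := by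
      intro b
      rcases eq_or_ne a b with rfl | hab
      · simp only [lt_self_iff_false, if_false, if_true, add_zero, true_and, or_false]
        rw [fst_card, Finset.card_filter]
      · rcases lt_or_ge a b with hlt | hle
        · have : ∀ j : Fin k, ((a = b ∧ (i, j) ∈ E a) ∨ a < b) := fun j => Or.inr hlt
          simp [this, hab, hlt, Finset.card_univ]
        · have hnlt : ¬ a < b := not_lt.mpr hle
          have : ∀ j : Fin k, ¬ ((a = b ∧ (i, j) ∈ E a) ∨ a < b) := by
            intro j hj
            rcases hj with ⟨h1, -⟩ | h2
            exacts [hab h1, hnlt h2]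
          simp [this, hab, hnlt]
    rw [Finset.sum_congr rfl (fun b _ => step b)]
    rw [Finset.sum_add_distrib, Finset.sum_ite_eq, if_pos (Finset.mem_univ a)]
    congr 1
    rw [← Finset.sum_filter, Finset.sum_const, smul_eq_mul]
    congr 1
    rw [show Finset.univ.filter (a < ·) = Finset.Ioi a from Finset.filter_lt_eq_Ioi]
    exact Fin.card_Ioi a
  have key2 : ∀ (b : Fin m) (j : Fin k), (F.filter fun p => p.2 = (b, j)).card
      = ((E b).filter fun p => p.2 = j).card + b.val * k := by
    intro b j
    rw [snd_card]
    have hmem : ∀ q : Fin m × Fin k, ((q, (b, j)) ∈ F) ↔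
        ((q.1 = b ∧ (q.2, j) ∈ E q.1) ∨ q.1 < b) := by
      intro q; simp [hF]
    rw [Finset.filter_congr (fun q _ => by rw [hmem q])]
    rw [Finset.card_filter, Fintype.sum_prod_type]
    have step : ∀ a : Fin m, (∑ i : Fin k, if (a = b ∧ (i, j) ∈ E a) ∨ a < b then 1 else 0)
        = (if a = b then ((E b).filter fun p => p.2 = j).card else 0)
          + (if a < b then k else 0) := by
      intro a
      rcases eq_or_ne a b with rfl | hab
      · simp only [lt_self_iff_false, if_false, if_true, add_zero, true_and, or_false]
        rw [snd_card, Finset.card_filter]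
      · rcases lt_or_ge a b with hlt | hle
        · have : ∀ i : Fin k, ((a = b ∧ (i, j) ∈ E a) ∨ a < b) := fun i => Or.inr hlt
          simp [this, hab, hlt, Finset.card_univ]
        · have hnlt : ¬ a < b := not_lt.mpr hle
          have : ∀ i : Fin k, ¬ ((a = b ∧ (i, j) ∈ E a) ∨ a < b) := by
            intro i hi
            rcases hi with ⟨h1, -⟩ | h2
            exacts [hab h1, hnlt h2]
          simp [this, hab, hnlt]
    rw [Finset.sum_congr rfl (fun a _ => step a)]
    rw [Finset.sum_add_distrib, Finset.sum_ite_eq', if_pos (Finset.mem_univ b)]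
    congr 1
    rw [← Finset.sum_filter, Finset.sum_const, smul_eq_mul]
    congr 1
    rw [show Finset.univ.filter (· < b) = Finset.Iio b from Finset.filter_gt_eq_Iio]
    exact Fin.card_Iio b
  refine ⟨F, ?_, ?_⟩
  · rw [prod_univ_map]
    refine Finset.sum_congr rfl (fun a _ => ?_)
    rw [Multiset.map_map]
    exact Multiset.map_congr rfl (fun i _ => key1 a i)
  · rw [prod_univ_map]
    refine Finset.sum_congr rfl (fun b _ => ?_)
    rw [Multiset.map_map]
    exact Multiset.map_congr rfl (fun j _ => key2 b j)

lemma realizable_transport {α : Type} [Fintype α] [DecidableEq α] {n : ℕ} (e : Fin n ≃ α)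
    {d : Multiset ℕ × Multiset ℕ} (F : Finset (α × α))
    (h1 : Multiset.map (fun i => (F.filter (fun p => p.1 = i)).card) Finset.univ.val = d.1)
    (h2 : Multiset.map (fun j => (F.filter (fun p => p.2 = j)).card) Finset.univ.val = d.2) :
    Realizable n d := by
  classical
  have huniv : (Finset.univ.val.map ⇑e) = (Finset.univ : Finset α).val := by
    have h := congrArg Finset.val (Finset.map_univ_equiv e)
    simpa [Finset.map_val] using h
  refine ⟨F.map (e.prodCongr e).symm.toEmbedding, ?_, ?_⟩
  · rw [← h1]
    have hfil : ∀ i : Fin n,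
        ((F.map (e.prodCongr e).symm.toEmbedding).filter fun p => p.1 = i).card
          = (F.filter fun q => q.1 = e i).card := by
      intro i
      rw [Finset.filter_map, Finset.card_map]
      congr 1
      apply Finset.filter_congr
      intro q _
      show (e.symm q.1 = i) ↔ (q.1 = e i)
      exact e.symm_apply_eq
    calc Finset.univ.val.map
          (fun i => ((F.map (e.prodCongr e).symm.toEmbedding).filter fun p => p.1 = i).card)
        = Finset.univ.val.map (fun i => (F.filter fun q => q.1 = e i).card) := by
          exact Multiset.map_congr rfl (fun i _ => hfil i)
      _ = (Finset.univ.val.map ⇑e).map (fun x => (F.filter fun q => q.1 = x).card) := by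
          rw [Multiset.map_map]; rfl
      _ = Finset.univ.val.map (fun x => (F.filter fun q => q.1 = x).card) := by rw [huniv]
  · rw [← h2]
    have hfil : ∀ j : Fin n,
        ((F.map (e.prodCongr e).symm.toEmbedding).filter fun p => p.2 = j).card
          = (F.filter fun q => q.2 = e j).card := by
      intro j
      rw [Finset.filter_map, Finset.card_map]
      congr 1
      apply Finset.filter_congr
      intro q _
      show (e.symm q.2 = j) ↔ (q.2 = e j)
      exact e.symm_apply_eq
    calc Finset.univ.val.map
          (fun j => ((F.map (e.prodCongr e).symm.toEmbedding).filter fun p => p.2 = j).card)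
        = Finset.univ.val.map (fun j => (F.filter fun q => q.2 = e j).card) := by
          exact Multiset.map_congr rfl (fun j _ => hfil j)
      _ = (Finset.univ.val.map ⇑e).map (fun x => (F.filter fun q => q.2 = x).card) := by
          rw [Multiset.map_map]; rfl
      _ = Finset.univ.val.map (fun x => (F.filter fun q => q.2 = x).card) := by rw [huniv]

lemma my_card_sum {ι : Type} (s : Finset ι) (f : ι → Multiset ℕ) :
    Multiset.card (∑ a ∈ s, f a) = ∑ a ∈ s, Multiset.card (f a) := by
  induction s using Finset.cons_induction with
  | empty => simp
  | cons a s ha ih => rw [Finset.sum_cons, Finset.sum_cons, Multiset.card_add, ih]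

lemma realizable_bounds {k : ℕ} {d : Multiset ℕ × Multiset ℕ} (h : Realizable k d) :
    (∀ x ∈ d.1, x ≤ k) ∧ (∀ x ∈ d.2, x ≤ k) := by
  obtain ⟨E, h1, h2⟩ := h
  constructor
  · intro x hx
    rw [← h1] at hx
    rw [Multiset.mem_map] at hx
    obtain ⟨i, -, rfl⟩ := hx
    calc (E.filter fun p => p.1 = i).card
        = (Finset.univ.filter fun j : Fin k => (i, j) ∈ E).card := fst_card E i
      _ ≤ (Finset.univ : Finset (Fin k)).card := Finset.card_filter_le _ _
      _ = k := by simp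
  · intro x hx
    rw [← h2] at hx
    rw [Multiset.mem_map] at hx
    obtain ⟨j, -, rfl⟩ := hx
    calc (E.filter fun p => p.2 = j).card
        = (Finset.univ.filter fun i : Fin k => (i, j) ∈ E).card := snd_card E j
      _ ≤ (Finset.univ : Finset (Fin k)).card := Finset.card_filter_le _ _
      _ = k := by simp

lemma finite_real (n : ℕ) : Finite {d : Multiset ℕ × Multiset ℕ //
    Multiset.card d.1 = n ∧ Multiset.card d.2 = n ∧ Realizable n d} := by
  classical
  refine Finite.of_surjective (fun E : Finset (Fin n × Fin n) =>
    (⟨(Multiset.map (fun i => (E.filter (fun p => p.1 = i)).card) Finset.univ.val,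
       Multiset.map (fun j => (E.filter (fun p => p.2 = j)).card) Finset.univ.val),
      by simp, by simp, E, rfl, rfl⟩ : {d : Multiset ℕ × Multiset ℕ //
        Multiset.card d.1 = n ∧ Multiset.card d.2 = n ∧ Realizable n d})) ?_
  rintro ⟨⟨d1, d2⟩, h1, h2, E, he1, he2⟩
  exact ⟨E, Subtype.ext (Prod.ext he1 he2)⟩

/-- Let `k ∣ n` be positive integers.  Let `N(k)` be the number of splitted bipartite
degree sequences (pairs of multisets of naturals, each of cardinality `k`) realizable
on parts of sizes `k` and `k` with at least one edge, and let `N*(n)` be the number of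
pairs of multisets of naturals, each of cardinality `n`, realizable on parts of sizes
`n` and `n`.  Then `N*(n) ≥ N(k)^(n/k)`. -/
theorem card_graphical_ge_pow (k n : ℕ) (hk : 0 < k) (hn : 0 < n) (hdvd : k ∣ n) :
    Nat.card {d : Multiset ℕ × Multiset ℕ //
        Multiset.card d.1 = n ∧ Multiset.card d.2 = n ∧ Realizable n d} ≥
      (Nat.card {d : Multiset ℕ × Multiset ℕ //
        Multiset.card d.1 = k ∧ Multiset.card d.2 = k ∧
          RealizableWithEdge k d}) ^ (n / k) := by
  classical
  set m := n / k with hm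
  have hmk : n = m * k := (Nat.div_mul_cancel hdvd).symm
  set S := {d : Multiset ℕ × Multiset ℕ //
      Multiset.card d.1 = k ∧ Multiset.card d.2 = k ∧ RealizableWithEdge k d} with hS
  set T := {d : Multiset ℕ × Multiset ℕ //
      Multiset.card d.1 = n ∧ Multiset.card d.2 = n ∧ Realizable n d} with hT
  have hweaken : ∀ {d : Multiset ℕ × Multiset ℕ}, RealizableWithEdge k d → Realizable k d := by
    rintro d ⟨E, -, h1, h2⟩; exact ⟨E, h1, h2⟩
  have instT : Finite T := finite_real n
  have instS : Finite S := by
    have : Finite {d : Multiset ℕ × Multiset ℕ //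
        Multiset.card d.1 = k ∧ Multiset.card d.2 = k ∧ Realizable k d} := finite_real k
    exact Finite.of_injective (fun s : S =>
      (⟨s.1, s.2.1, s.2.2.1, hweaken s.2.2.2⟩ : {d : Multiset ℕ × Multiset ℕ //
        Multiset.card d.1 = k ∧ Multiset.card d.2 = k ∧ Realizable k d}))
      (by
        intro a b h
        apply Subtype.ext
        have h' := congrArg Subtype.val h
        exact h')
  have e : Fin n ≃ Fin m × Fin k := (finCongr hmk).trans finProdFinEquiv.symm
  -- the composed degree sequence
  have hcard1 : ∀ t : Fin m → S,
      Multiset.card (∑ a : Fin m, ((t a).1.1.map (· + (m - 1 - a.val) * k))) = n := by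
    intro t
    rw [my_card_sum]
    have : ∀ a : Fin m, Multiset.card ((t a).1.1.map (· + (m - 1 - a.val) * k)) = k := by
      intro a; rw [Multiset.card_map]; exact (t a).2.1
    rw [Finset.sum_congr rfl (fun a _ => this a), Finset.sum_const, Finset.card_univ,
      Fintype.card_fin, smul_eq_mul, ← hmk]
  have hcard2 : ∀ t : Fin m → S,
      Multiset.card (∑ a : Fin m, ((t a).1.2.map (· + a.val * k))) = n := by
    intro t
    rw [my_card_sum]
    have : ∀ a : Fin m, Multiset.card ((t a).1.2.map (· + a.val * k)) = k := by
      intro a; rw [Multiset.card_map]; exact (t a).2.2.1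
    rw [Finset.sum_congr rfl (fun a _ => this a), Finset.sum_const, Finset.card_univ,
      Fintype.card_fin, smul_eq_mul, ← hmk]
  have hreal : ∀ t : Fin m → S,
      Realizable n (∑ a : Fin m, ((t a).1.1.map (· + (m - 1 - a.val) * k)),
        ∑ a : Fin m, ((t a).1.2.map (· + a.val * k))) := by
    intro t
    have hex : ∀ a : Fin m, ∃ E : Finset (Fin k × Fin k),
        Multiset.map (fun i => (E.filter (fun p => p.1 = i)).card) Finset.univ.val
          = (t a).1.1 ∧
        Multiset.map (fun j => (E.filter (fun p => p.2 = j)).card) Finset.univ.val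
          = (t a).1.2 := fun a => hweaken (t a).2.2.2
    choose Ea hEa1 hEa2 using hex
    obtain ⟨F, hF1, hF2⟩ := realizable_comp k m Ea
    apply realizable_transport e F
    · rw [hF1]
      exact Finset.sum_congr rfl (fun a _ => by rw [hEa1 a])
    · rw [hF2]
      exact Finset.sum_congr rfl (fun a _ => by rw [hEa2 a])
  set Φ : (Fin m → S) → T := fun t =>
    ⟨(∑ a : Fin m, ((t a).1.1.map (· + (m - 1 - a.val) * k)),
      ∑ a : Fin m, ((t a).1.2.map (· + a.val * k))),
      hcard1 t, hcard2 t, hreal t⟩ with hΦ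
  have hrevsum : ∀ v : Fin m → Multiset ℕ,
      ∑ a : Fin m, (v a).map (· + (m - 1 - a.val) * k)
        = ∑ a : Fin m, (v (Fin.rev a)).map (· + a.val * k) := by
    intro v
    rw [← Equiv.sum_comp (Fin.revPerm : Equiv.Perm (Fin m))
      (fun a => (v a).map (· + (m - 1 - a.val) * k))]
    refine Finset.sum_congr rfl (fun a _ => ?_)
    have hval : m - 1 - (Fin.rev a).val = a.val := by
      rw [Fin.val_rev]
      have := a.isLt
      omega
    rw [show (Fin.revPerm : Equiv.Perm (Fin m)) a = Fin.rev a from rfl, hval]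
  have hinj : Function.Injective Φ := by
    intro t t' h
    have hp := congrArg Subtype.val h
    rw [Prod.ext_iff] at hp
    obtain ⟨h1, h2⟩ := hp
    have hb : ∀ (t : Fin m → S) (a : Fin m),
        (∀ x ∈ (t a).1.1, x ≤ k) ∧ (∀ x ∈ (t a).1.2, x ≤ k) :=
      fun t a => realizable_bounds (hweaken (t a).2.2.2)
    have heq2 := comp_inj k m (fun a => (t a).1.2) (fun a => (t' a).1.2)
      (fun a => (t a).2.2.1) (fun a => (hb t a).2)
      (fun a => (t' a).2.2.1) (fun a => (hb t' a).2) h2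
    have h1' : (∑ a : Fin m, (((t a : Multiset ℕ × Multiset ℕ)).1.map (· + (m - 1 - a.val) * k)))
        = ∑ a : Fin m, (((t' a : Multiset ℕ × Multiset ℕ)).1.map (· + (m - 1 - a.val) * k)) := h1
    rw [hrevsum, hrevsum] at h1'
    have heq1 := comp_inj k m (fun a => (t (Fin.rev a)).1.1) (fun a => (t' (Fin.rev a)).1.1)
      (fun a => (t _).2.1) (fun a => (hb t _).1)
      (fun a => (t' _).2.1) (fun a => (hb t' _).1) h1'
    funext a
    have h1a : (t a).1.1 = (t' a).1.1 := by
      have := congrFun heq1 (Fin.rev a)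
      simpa [Fin.rev_rev] using this
    have h2a : (t a).1.2 = (t' a).1.2 := congrFun heq2 a
    exact Subtype.ext (Prod.ext h1a h2a)
  calc (Nat.card S) ^ (n / k) = Nat.card (Fin m → S) := by
        rw [Nat.card_fun]
        simp [← hm]
    _ ≤ Nat.card T := Nat.card_le_card_of_injective Φ hinj
end

section
/- Let V be a finite vertex set and M : V → ℕ → ℕ a function with M(v)(i) = 0 whenever i > |V|. Define δ(v) = Σ_i M(v)(i) and V_i = {v ∈ V : δ(v) = i}. Then M is a graphical degree spectra matrix (there exists a simple graph G on V such that for every vertex v and every i, the number of neighbors of v of degree i in G equals M(v)(i)) if and only if both of the following hold: (a) for every pair i < j there exists a bipartite graph on parts (V_i, V_j) in which every v ∈ V_i has degree M(v)(j) and every w ∈ V_j has degree M(w)(i); and (b) for every i there exists a simple graph on V_i in which every v ∈ V_i has degree M(v)(i). -/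
attribute [local instance] Classical.propDecidable

/-- Auxiliary graph built from a family of bipartite edge sets `E` and diagonal graphs `H`. -/
def specGraph {V : Type*} (δ : V → ℕ)
    (E : ∀ i j : ℕ, i < j → Finset ({v : V // δ v = i} × {v : V // δ v = j}))
    (H : ∀ i : ℕ, SimpleGraph {v : V // δ v = i}) : SimpleGraph V where
  Adj v w :=
    (∃ i, ∃ hv : δ v = i, ∃ hw : δ w = i, (H i).Adj ⟨v, hv⟩ ⟨w, hw⟩)
    ∨ (∃ i j, ∃ h : i < j, ∃ hv : δ v = i, ∃ hw : δ w = j,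
        (⟨v, hv⟩, ⟨w, hw⟩) ∈ E i j h)
    ∨ (∃ i j, ∃ h : i < j, ∃ hw : δ w = i, ∃ hv : δ v = j,
        (⟨w, hw⟩, ⟨v, hv⟩) ∈ E i j h)
  symm := by
    constructor
    rintro v w (⟨i, hv, hw, hadj⟩ | ⟨i, j, h, hv, hw, hmem⟩ | ⟨i, j, h, hw, hv, hmem⟩)
    · exact Or.inl ⟨i, hw, hv, hadj.symm⟩
    · exact Or.inr (Or.inr ⟨i, j, h, hv, hw, hmem⟩)
    · exact Or.inr (Or.inl ⟨i, j, h, hw, hv, hmem⟩)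
  loopless := by
    constructor
    rintro v (⟨i, hv, hw, hadj⟩ | ⟨i, j, h, hv, hw, _⟩ | ⟨i, j, h, hw, hv, _⟩)
    · exact (H i).loopless.irrefl _ hadj
    · omega
    · omega

theorem specGraph_adj {V : Type*} (δ : V → ℕ)
    (E : ∀ i j : ℕ, i < j → Finset ({v : V // δ v = i} × {v : V // δ v = j}))
    (H : ∀ i : ℕ, SimpleGraph {v : V // δ v = i}) (v w : V) :
    (specGraph δ E H).Adj v w ↔
    ((∃ i, ∃ hv : δ v = i, ∃ hw : δ w = i, (H i).Adj ⟨v, hv⟩ ⟨w, hw⟩)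
    ∨ (∃ i j, ∃ h : i < j, ∃ hv : δ v = i, ∃ hw : δ w = j,
        (⟨v, hv⟩, ⟨w, hw⟩) ∈ E i j h)
    ∨ (∃ i j, ∃ h : i < j, ∃ hw : δ w = i, ∃ hv : δ v = j,
        (⟨w, hw⟩, ⟨v, hv⟩) ∈ E i j h)) := Iff.rfl

/-- **Graphicality of degree spectra matrices.**  Let `V` be a finite vertex set and
`M : V → ℕ → ℕ` with `M v i = 0` for `i > |V|`.  Put `δ v = ∑ i, M v i` and
`V_i = {v : δ v = i}`.  Then `M` is a graphical degree spectra matrix — there is a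
simple graph `G` on `V` in which, for every `v` and `i`, the number of neighbors of
`v` of degree `i` equals `M v i` — iff (a) for every `i < j` there is a bipartite
graph on parts `(V_i, V_j)` (modelled by its edge set) in which every `v ∈ V_i` has
degree `M v j` and every `w ∈ V_j` has degree `M w i`, and (b) for every `i` there is
a simple graph on `V_i` in which every `v ∈ V_i` has degree `M v i`. -/
theorem degree_spectra_matrix_graphical_iff
    {V : Type*} [Fintype V] (M : V → ℕ → ℕ)
    (hM : ∀ v i, Fintype.card V < i → M v i = 0)
    (δ : V → ℕ) (hδ : ∀ v, δ v = ∑ i ∈ Finset.range (Fintype.card V + 1), M v i) :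
    (∃ G : SimpleGraph V, ∀ (v : V) (i : ℕ),
        ((G.neighborFinset v).filter (fun u => G.degree u = i)).card = M v i) ↔
    ((∀ i j : ℕ, i < j →
        ∃ E : Finset ({v : V // δ v = i} × {v : V // δ v = j}),
          (∀ v : {v : V // δ v = i}, (E.filter (fun p => p.1 = v)).card = M v.1 j) ∧
          (∀ w : {v : V // δ v = j}, (E.filter (fun p => p.2 = w)).card = M w.1 i)) ∧
      (∀ i : ℕ, ∃ H : SimpleGraph {v : V // δ v = i},
        ∀ v : {v : V // δ v = i}, H.degree v = M v.1 i)) := by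
  constructor
  · rintro ⟨G, hG⟩
    have hdeg : ∀ v, G.degree v = δ v := by
      intro v
      rw [hδ, ← SimpleGraph.card_neighborFinset_eq_degree,
        Finset.card_eq_sum_card_fiberwise (f := fun u => G.degree u)
          (t := Finset.range (Fintype.card V + 1))
          (fun u _ => Finset.mem_range.mpr
            (Nat.lt_succ_of_lt (G.degree_lt_card_verts u)))]
      exact Finset.sum_congr rfl fun i _ => hG v i
    constructor
    · intro i j hij
      refine ⟨Finset.univ.filter (fun p => G.Adj p.1.1 p.2.1), ?_, ?_⟩
      · intro v
        rw [← hG v.1 j]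
        apply Finset.card_bij (fun p _ => p.2.1)
        · intro p hp
          simp only [Finset.mem_filter, Finset.mem_univ, true_and] at hp
          simp only [Finset.mem_filter, SimpleGraph.mem_neighborFinset]
          exact ⟨hp.2 ▸ hp.1, by rw [hdeg]; exact p.2.2⟩
        · intro p hp q hq h
          simp only [Finset.mem_filter, Finset.mem_univ, true_and] at hp hq
          exact Prod.ext (hp.2.trans hq.2.symm) (Subtype.ext h)
        · intro u hu
          simp only [Finset.mem_filter, SimpleGraph.mem_neighborFinset] at hu
          refine ⟨(v, ⟨u, by rw [← hdeg]; exact hu.2⟩), ?_, rfl⟩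
          simp only [Finset.mem_filter, Finset.mem_univ, true_and]
          exact ⟨hu.1, trivial⟩
      · intro w
        rw [← hG w.1 i]
        apply Finset.card_bij (fun p _ => p.1.1)
        · intro p hp
          simp only [Finset.mem_filter, Finset.mem_univ, true_and] at hp
          simp only [Finset.mem_filter, SimpleGraph.mem_neighborFinset]
          exact ⟨(hp.2 ▸ hp.1).symm, by rw [hdeg]; exact p.1.2⟩
        · intro p hp q hq h
          simp only [Finset.mem_filter, Finset.mem_univ, true_and] at hp hq
          exact Prod.ext (Subtype.ext h) (hp.2.trans hq.2.symm)
        · intro u hu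
          simp only [Finset.mem_filter, SimpleGraph.mem_neighborFinset] at hu
          refine ⟨(⟨u, by rw [← hdeg]; exact hu.2⟩, w), ?_, rfl⟩
          simp only [Finset.mem_filter, Finset.mem_univ, true_and]
          exact ⟨hu.1.symm, trivial⟩
    · intro i
      refine ⟨SimpleGraph.comap Subtype.val G, ?_⟩
      intro v
      rw [← hG v.1 i, ← SimpleGraph.card_neighborFinset_eq_degree]
      apply Finset.card_bij (fun u _ => u.1)
      · intro u hu
        simp only [SimpleGraph.mem_neighborFinset, SimpleGraph.comap_adj] at hu
        simp only [Finset.mem_filter, SimpleGraph.mem_neighborFinset]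
        exact ⟨hu, by rw [hdeg]; exact u.2⟩
      · intro u _ w _ h
        exact Subtype.ext h
      · intro u hu
        simp only [Finset.mem_filter, SimpleGraph.mem_neighborFinset] at hu
        refine ⟨⟨u, by rw [← hdeg]; exact hu.2⟩, ?_, rfl⟩
        simp only [SimpleGraph.mem_neighborFinset, SimpleGraph.comap_adj]
        exact hu.1
  · rintro ⟨hA, hB⟩
    choose E hE1 hE2 using hA
    choose H hH using hB
    set G : SimpleGraph V := specGraph δ E H with hGdef
    have key : ∀ (v : V) (j : ℕ),
        ((G.neighborFinset v).filter (fun u => δ u = j)).card = M v j := by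
      intro v j
      rcases lt_trichotomy (δ v) j with h | h | h
      · rw [← hE1 (δ v) j h ⟨v, rfl⟩]
        apply Finset.card_bij (fun u hu =>
          ((⟨v, rfl⟩ : {x : V // δ x = δ v}),
           (⟨u, (Finset.mem_filter.mp hu).2⟩ : {x : V // δ x = j})))
        · intro u hu
          obtain ⟨hnb, hδu⟩ := Finset.mem_filter.mp hu
          rw [SimpleGraph.mem_neighborFinset, hGdef, specGraph_adj] at hnb
          subst hδu
          rw [Finset.mem_filter]
          refine ⟨?_, rfl⟩
          rcases hnb with ⟨i, hv, hw, _⟩ | ⟨i, j', h', hv, hw, hmem⟩ | ⟨i, j', h', hw, hv, _⟩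
          · omega
          · subst hv; subst hw; exact hmem
          · omega
        · intro u hu u' hu' hee
          exact congrArg (fun p => p.2.1) hee
        · intro p hp
          obtain ⟨hmem, hp1⟩ := Finset.mem_filter.mp hp
          refine ⟨p.2.1, ?_, ?_⟩
          · rw [Finset.mem_filter, SimpleGraph.mem_neighborFinset, hGdef, specGraph_adj]
            refine ⟨Or.inr (Or.inl ⟨δ v, j, h, rfl, p.2.2, ?_⟩), p.2.2⟩
            rw [show ((⟨v, rfl⟩ : {x : V // δ x = δ v}),
              (⟨p.2.1, p.2.2⟩ : {x : V // δ x = j})) = p from by rw [← hp1]]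
            exact hmem
          · exact Prod.ext hp1.symm rfl
      · subst h
        rw [← hH (δ v) ⟨v, rfl⟩, ← SimpleGraph.card_neighborFinset_eq_degree]
        apply Finset.card_bij (fun u hu =>
          (⟨u, (Finset.mem_filter.mp hu).2⟩ : {x : V // δ x = δ v}))
        · intro u hu
          obtain ⟨hnb, hδu⟩ := Finset.mem_filter.mp hu
          rw [SimpleGraph.mem_neighborFinset, hGdef, specGraph_adj] at hnb
          rw [SimpleGraph.mem_neighborFinset]
          rcases hnb with ⟨i, hv, hw, hadj⟩ | ⟨i, j', h', hv, hw, _⟩ | ⟨i, j', h', hw, hv, _⟩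
          · subst hv; exact hadj
          · omega
          · omega
        · intro u hu u' hu' hee
          exact congrArg (fun x => x.1) hee
        · intro w hw
          rw [SimpleGraph.mem_neighborFinset] at hw
          refine ⟨w.1, ?_, ?_⟩
          · rw [Finset.mem_filter, SimpleGraph.mem_neighborFinset, hGdef, specGraph_adj]
            exact ⟨Or.inl ⟨δ v, rfl, w.2, hw⟩, w.2⟩
          · exact Subtype.ext rfl
      · rw [← hE2 j (δ v) h ⟨v, rfl⟩]
        apply Finset.card_bij (fun u hu =>
          ((⟨u, (Finset.mem_filter.mp hu).2⟩ : {x : V // δ x = j}),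
           (⟨v, rfl⟩ : {x : V // δ x = δ v})))
        · intro u hu
          obtain ⟨hnb, hδu⟩ := Finset.mem_filter.mp hu
          rw [SimpleGraph.mem_neighborFinset, hGdef, specGraph_adj] at hnb
          subst hδu
          rw [Finset.mem_filter]
          refine ⟨?_, rfl⟩
          rcases hnb with ⟨i, hv, hw, _⟩ | ⟨i, j', h', hv, hw, _⟩ | ⟨i, j', h', hw, hv, hmem⟩
          · omega
          · omega
          · subst hw; subst hv; exact hmem
        · intro u hu u' hu' hee
          exact congrArg (fun p => p.1.1) hee
        · intro p hp
          obtain ⟨hmem, hp2⟩ := Finset.mem_filter.mp hp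
          refine ⟨p.1.1, ?_, ?_⟩
          · rw [Finset.mem_filter, SimpleGraph.mem_neighborFinset, hGdef, specGraph_adj]
            refine ⟨Or.inr (Or.inr ⟨j, δ v, h, p.1.2, rfl, ?_⟩), p.1.2⟩
            rw [show ((⟨p.1.1, p.1.2⟩ : {x : V // δ x = j}),
              (⟨v, rfl⟩ : {x : V // δ x = δ v})) = p from by rw [← hp2]]
            exact hmem
          · exact Prod.ext rfl hp2.symm
    have hdeg : ∀ v, G.degree v = δ v := by
      intro v
      rw [← SimpleGraph.card_neighborFinset_eq_degree,
        Finset.card_eq_sum_card_fiberwise (f := fun u => δ u)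
          (t := Finset.range (Fintype.card V + 1) ∪ Finset.univ.image δ)
          (fun u _ => Finset.mem_union_right _
            (Finset.mem_image_of_mem δ (Finset.mem_univ u)))]
      rw [Finset.sum_congr rfl fun j _ => key v j]
      rw [hδ v]
      refine (Finset.sum_subset Finset.subset_union_left ?_).symm
      intro j _ hj
      exact hM v j (by simpa using Finset.mem_range.not.mp hj)
    refine ⟨G, ?_⟩
    intro v i
    rw [← key v i]
    congr 1
    exact Finset.filter_congr fun u _ => by rw [hdeg u]
end
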